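/- For all integers m ≥ 2 and j ≥ 1 and all p_1, …, p_m ∈ (0,1], one has f_{m,j}(p_1, …, p_m) ≥ f_{m,j}(p̄, …, p̄), where p̄ = (p_1 + ⋯ + p_m)/m. -/

import Mathlib

open MeasureTheory

/-- The law of a geometric random variable with success probability `p`,
supported on the positive integers: `P(Y = k) = (1 - p)^(k-1) * p` for `k ≥ 1`. -/
noncomputable def geomMeasure (p : ℝ) : Measure ℕ :=
  Measure.count.withDensity
    (fun k => if 1 ≤ k then ENNReal.ofReal ((1 - p) ^ (k - 1) * p) else 0)

/-- `f_{m,j}(p_1, …, p_m) = P(Y_1 + ⋯ + Y_m > j)` where `Y_1, …, Y_m` are independent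
with `Y_i ~ Geom(p_i)`; realized via the product of the geometric laws. -/
noncomputable def geomF (m j : ℕ) (p : Fin m → ℝ) : ENNReal :=
  Measure.pi (fun i => geomMeasure (p i)) {x | j < ∑ i, x i}

-- ===== auxiliary development =====

open Finset

namespace GeomAvgAux

/-- complete homogeneous symmetric polynomial in two variables -/
noncomputable def hpoly (a b : ℝ) (n : ℕ) : ℝ := ∑ i ∈ range (n + 1), a ^ i * b ^ (n - i)

lemma hpoly_zero (a b : ℝ) : hpoly a b 0 = 1 := by simp [hpoly]

lemma hpoly_one (a b : ℝ) : hpoly a b 1 = b + a := by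
  simp [hpoly, Finset.sum_range_succ]

lemma hpoly_nonneg {a b : ℝ} (ha : 0 ≤ a) (hb : 0 ≤ b) (n : ℕ) : 0 ≤ hpoly a b n := by
  apply Finset.sum_nonneg
  intro i _
  positivity

lemma hpoly_comm (a b : ℝ) (n : ℕ) : hpoly a b n = hpoly b a n := by
  unfold hpoly
  rw [← Finset.sum_range_reflect]
  apply Finset.sum_congr rfl
  intro i hi
  rw [Finset.mem_range] at hi
  have h1 : n + 1 - 1 - i = n - i := by omega
  have h2 : n - (n - i) = i := by omega
  rw [h1, h2, mul_comm]

lemma hpoly_succ (a b : ℝ) (n : ℕ) : hpoly a b (n + 1) = a * hpoly a b n + b ^ (n + 1) := by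
  unfold hpoly
  rw [Finset.sum_range_succ' (fun i => a ^ i * b ^ (n + 1 - i)) (n + 1)]
  rw [Finset.mul_sum]
  simp only [pow_zero, one_mul, Nat.sub_zero, Nat.succ_sub_succ]
  congr 1
  apply Finset.sum_congr rfl
  intro i _
  ring

lemma hpoly_succ' (a b : ℝ) (n : ℕ) : hpoly a b (n + 1) = b * hpoly a b n + a ^ (n + 1) := by
  rw [hpoly_comm, hpoly_succ, hpoly_comm]

lemma hpoly_rec (a b : ℝ) (n : ℕ) :
    hpoly a b (n + 2) = (a + b) * hpoly a b (n + 1) - a * b * hpoly a b n := by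
  have h1 : hpoly a b (n + 2) = a * hpoly a b (n + 1) + b ^ (n + 2) := hpoly_succ a b (n + 1)
  have h4 : hpoly a b (n + 1) = a * hpoly a b n + b ^ (n + 1) := hpoly_succ a b n
  have hb : b ^ (n + 2) = b * b ^ (n + 1) := by ring
  linear_combination h1 - b * h4 + hb

lemma hpoly_mul_le {a b : ℝ} (ha : 0 ≤ a) (ha1 : a ≤ 1) (hb : 0 ≤ b) (hb1 : b ≤ 1) (n : ℕ) :
    a * b * hpoly a b n ≤ hpoly a b (n + 1) := by
  rw [hpoly_succ]
  have h0 := hpoly_nonneg ha hb n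
  nlinarith [mul_nonneg (mul_nonneg ha (sub_nonneg.2 hb1)) h0, pow_nonneg hb (n + 1)]

/-- partial-cdf identity -/
lemma cdf_eq (a b : ℝ) (N : ℕ) :
    (1 - a) * (1 - b) * ∑ d ∈ range (N + 1), hpoly a b d
      = 1 - (hpoly a b (N + 1) - a * b * hpoly a b N) := by
  induction N with
  | zero => simp [hpoly_zero, hpoly_one]; ring
  | succ N ih =>
    rw [Finset.sum_range_succ, hpoly_rec]
    linear_combination ih

lemma cdf_le_one {a b : ℝ} (ha : 0 ≤ a) (ha1 : a ≤ 1) (hb : 0 ≤ b) (hb1 : b ≤ 1) (N : ℕ) :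
    (1 - a) * (1 - b) * ∑ d ∈ range N, hpoly a b d ≤ 1 := by
  cases N with
  | zero => simp
  | succ N =>
    rw [cdf_eq]
    have := hpoly_mul_le ha ha1 hb hb1 N
    linarith

/-- mixed convolution -/
noncomputable def S (a b a' b' : ℝ) (n : ℕ) : ℝ :=
  ∑ i ∈ range (n + 1), hpoly a b i * hpoly a' b' (n - i)

lemma S_reflect (a b a' b' : ℝ) (n : ℕ) :
    S a b a' b' n = ∑ i ∈ range (n + 1), hpoly a' b' i * hpoly a b (n - i) := by
  unfold S
  rw [← Finset.sum_range_reflect]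
  apply Finset.sum_congr rfl
  intro i hi
  rw [Finset.mem_range] at hi
  have h1 : n + 1 - 1 - i = n - i := by omega
  have h2 : n - (n - i) = i := by omega
  rw [h1, h2, mul_comm]

lemma S_rec (a b a' b' : ℝ) (n : ℕ) :
    S a b a' b' (n + 2)
      = (a + b) * S a b a' b' (n + 1) - a * b * S a b a' b' n + hpoly a' b' (n + 2) := by
  have e1 : S a b a' b' (n + 2)
      = ∑ i ∈ range (n + 1), hpoly a b (i + 2) * hpoly a' b' (n - i)
        + hpoly a b 1 * hpoly a' b' (n + 1) + hpoly a b 0 * hpoly a' b' (n + 2) := by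
    unfold S
    rw [Finset.sum_range_succ' (fun i => hpoly a b i * hpoly a' b' (n + 2 - i)) (n + 2)]
    rw [Finset.sum_range_succ' (fun i => hpoly a b (i + 1) * hpoly a' b' (n + 2 - (i + 1))) (n + 1)]
    simp only [Nat.succ_sub_succ, Nat.sub_zero]
    all_goals ring
  have e2 : S a b a' b' (n + 1)
      = ∑ i ∈ range (n + 1), hpoly a b (i + 1) * hpoly a' b' (n - i)
        + hpoly a b 0 * hpoly a' b' (n + 1) := by
    unfold S
    rw [Finset.sum_range_succ' (fun i => hpoly a b i * hpoly a' b' (n + 1 - i)) (n + 1)]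
    simp only [Nat.succ_sub_succ, Nat.sub_zero]
    all_goals ring
  rw [e1]
  have e3 : ∑ i ∈ range (n + 1), hpoly a b (i + 2) * hpoly a' b' (n - i)
      = (a + b) * ∑ i ∈ range (n + 1), hpoly a b (i + 1) * hpoly a' b' (n - i)
        - a * b * S a b a' b' n := by
    unfold S
    rw [Finset.mul_sum, Finset.mul_sum, ← Finset.sum_sub_distrib]
    apply Finset.sum_congr rfl
    intro i _
    rw [hpoly_rec]
    ring
  rw [e3, hpoly_zero, hpoly_one]
  have e2' : ∑ i ∈ range (n + 1), hpoly a b (i + 1) * hpoly a' b' (n - i)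
      = S a b a' b' (n + 1) - hpoly a' b' (n + 1) := by
    rw [e2, hpoly_zero]; ring
  rw [e2']
  ring

/-- key difference identity -/
lemma diff_eq {a b a' b' : ℝ} (hs : a + b = a' + b') :
    ∀ n : ℕ, hpoly a b (n + 2) - hpoly a' b' (n + 2) = (a' * b' - a * b) * S a b a' b' n := by
  intro n
  induction n using Nat.strong_induction_on with
  | _ n ih =>
    match n with
    | 0 =>
      have hS : S a b a' b' 0 = 1 := by simp [S, hpoly_zero]
      have h2 : hpoly a b (0 + 2) = (a + b) * hpoly a b 1 - a * b * hpoly a b 0 := hpoly_rec a b 0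
      have h2' : hpoly a' b' (0 + 2) = (a' + b') * hpoly a' b' 1 - a' * b' * hpoly a' b' 0 :=
        hpoly_rec a' b' 0
      rw [hS, h2, h2', hpoly_zero, hpoly_zero, hpoly_one, hpoly_one]
      linear_combination (a + b + a' + b') * hs
    | 1 =>
      have hS : S a b a' b' 1 = 1 * (b' + a') + (b + a) * 1 := by
        unfold S
        rw [Finset.sum_range_succ, Finset.sum_range_one]
        simp [hpoly_zero, hpoly_one]
      have h3 : hpoly a b (1 + 2) = (a + b) * hpoly a b (1 + 1) - a * b * hpoly a b 1 :=
        hpoly_rec a b 1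
      have h3' : hpoly a' b' (1 + 2) = (a' + b') * hpoly a' b' (1 + 1) - a' * b' * hpoly a' b' 1 :=
        hpoly_rec a' b' 1
      have h2 : hpoly a b (1 + 1) = (a + b) * hpoly a b 1 - a * b * hpoly a b 0 := hpoly_rec a b 0
      have h2' : hpoly a' b' (1 + 1) = (a' + b') * hpoly a' b' 1 - a' * b' * hpoly a' b' 0 :=
        hpoly_rec a' b' 0
      rw [hS, h3, h3', h2, h2', hpoly_zero, hpoly_zero, hpoly_one, hpoly_one]
      linear_combination ((a + b) ^ 2 + (a + b) * (a' + b') + (a' + b') ^ 2 - a * b - a' * b') * hs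
    | (k + 2) =>
      have ih1 := ih (k + 1) (by omega)
      have ih0 := ih k (by omega)
      have hr := S_rec a b a' b' k
      have h1 : hpoly a b (k + 2 + 2)
          = (a + b) * hpoly a b (k + 2 + 1) - a * b * hpoly a b (k + 2) := hpoly_rec a b (k + 2)
      have h2 : hpoly a' b' (k + 2 + 2)
          = (a' + b') * hpoly a' b' (k + 2 + 1) - a' * b' * hpoly a' b' (k + 2) :=
        hpoly_rec a' b' (k + 2)
      simp only [show k + 2 + 1 = k + 1 + 2 by omega] at h1 h2
      linear_combination h1 - h2 - (a' * b' - a * b) * hr + (a + b) * ih1 - (a * b) * ih0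
        + hpoly a' b' (k + 1 + 2) * hs

/-- triangle sum exchange -/
lemma triangle (F : ℕ → ℕ → ℝ) :
    ∀ K : ℕ, ∑ n ∈ range K, ∑ i ∈ range (n + 1), F i (n - i)
      = ∑ i ∈ range K, ∑ z ∈ range (K - i), F i z := by
  intro K
  induction K with
  | zero => simp
  | succ K ih =>
    rw [Finset.sum_range_succ, ih]
    conv_rhs => rw [Finset.sum_range_succ]
    have h2 : ∀ i ∈ range K, ∑ z ∈ range (K + 1 - i), F i z
        = ∑ z ∈ range (K - i), F i z + F i (K - i) := by
      intro i hi
      rw [Finset.mem_range] at hi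
      have : K + 1 - i = (K - i) + 1 := by omega
      rw [this, Finset.sum_range_succ]
    rw [Finset.sum_congr rfl h2, Finset.sum_add_distrib,
      Finset.sum_range_succ (fun i => F i (K - i)) K, show K + 1 - K = 1 by omega]
    simp [Nat.sub_self, Finset.sum_range_one]
    ring

/-- the main real inequality: the two-variable partial cdf increases under balancing -/
lemma key_real {a b a' b' : ℝ} (ha : 0 ≤ a) (ha1 : a ≤ 1) (hb : 0 ≤ b) (hb1 : b ≤ 1)
    (ha' : 0 ≤ a') (hb' : 0 ≤ b')
    (hs : a + b = a' + b') (hprod : a * b ≤ a' * b') (N : ℕ) :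
    (1 - a) * (1 - b) * ∑ d ∈ range N, hpoly a b d
      ≤ (1 - a') * (1 - b') * ∑ d ∈ range N, hpoly a' b' d := by
  match N with
  | 0 => simp
  | 1 =>
    simp only [Finset.sum_range_one, hpoly_zero, mul_one]
    nlinarith [hs, hprod]
  | (K + 2) =>
    have hee : (0:ℝ) ≤ a' * b' - a * b := by linarith
    set V := ∑ d ∈ range (K + 2), hpoly a b d with hV
    set V' := ∑ d ∈ range (K + 2), hpoly a' b' d with hV'
    set T := ∑ n ∈ range K, S a b a' b' n with hT
    -- step 1 : V - V' = e * T
    have step1 : V - V' = (a' * b' - a * b) * T := by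
      have expand : ∀ (c d : ℝ), ∑ x ∈ range (K + 2), hpoly c d x
          = ∑ x ∈ range K, hpoly c d (x + 2) + hpoly c d 1 + hpoly c d 0 := by
        intro c d
        rw [Finset.sum_range_succ' (fun x => hpoly c d x) (K + 1),
          Finset.sum_range_succ' (fun x => hpoly c d (x + 1)) K]
      have heq : ∑ x ∈ range K, hpoly a b (x + 2) - ∑ x ∈ range K, hpoly a' b' (x + 2)
          = ∑ x ∈ range K, (a' * b' - a * b) * S a b a' b' x := by
        rw [← Finset.sum_sub_distrib]
        apply Finset.sum_congr rfl
        intro x _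
        rw [diff_eq hs x]
      rw [hV, hV', expand, expand, hT, Finset.mul_sum]
      rw [hpoly_zero, hpoly_zero, hpoly_one, hpoly_one]
      linear_combination heq + hs
    -- step 2 : T as grouped double sum
    have step2 : T = ∑ i ∈ range K, hpoly a' b' i * ∑ z ∈ range (K - i), hpoly a b z := by
      rw [hT]
      have hc : ∀ n ∈ range K, S a b a' b' n
          = ∑ i ∈ range (n + 1), (fun i z => hpoly a' b' i * hpoly a b z) i (n - i) := by
        intro n _
        rw [S_reflect]
      rw [Finset.sum_congr rfl hc, triangle (fun i z => hpoly a' b' i * hpoly a b z) K]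
      apply Finset.sum_congr rfl
      intro i _
      rw [Finset.mul_sum]
    -- step 3 : (1-a)(1-b) T ≤ V'
    have step3 : (1 - a) * (1 - b) * T ≤ V' := by
      rw [step2, Finset.mul_sum]
      have hbd : ∀ i ∈ range K,
          (1 - a) * (1 - b) * (hpoly a' b' i * ∑ z ∈ range (K - i), hpoly a b z)
            ≤ hpoly a' b' i := by
        intro i _
        have hcd := cdf_le_one ha ha1 hb hb1 (K - i)
        have hh := hpoly_nonneg ha' hb' i
        nlinarith [mul_le_mul_of_nonneg_left hcd hh]
      calc ∑ i ∈ range K, (1 - a) * (1 - b) * (hpoly a' b' i * ∑ z ∈ range (K - i), hpoly a b z)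
          ≤ ∑ i ∈ range K, hpoly a' b' i := Finset.sum_le_sum hbd
        _ ≤ V' := by
            rw [hV']
            apply Finset.sum_le_sum_of_subset_of_nonneg
            · apply Finset.range_subset_range.2; omega
            · intro i _ _; exact hpoly_nonneg ha' hb' i
    -- assemble
    have hab : (1 - a') * (1 - b') = (1 - a) * (1 - b) + (a' * b' - a * b) := by
      linear_combination hs
    have hVeq : V = V' + (a' * b' - a * b) * T := by linarith [step1]
    rw [hVeq, hab]
    have h1 : 0 ≤ (a' * b' - a * b) * (V' - (1 - a) * (1 - b) * T) := by
      apply mul_nonneg hee; linarith [step3]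
    nlinarith [h1]

end GeomAvgAux

namespace GeomAvgAux

open Finset ENNReal

noncomputable def dens (p : ℝ) (k : ℕ) : ℝ≥0∞ :=
  if 1 ≤ k then ENNReal.ofReal ((1 - p) ^ (k - 1) * p) else 0

lemma geomMeasure_eq (p : ℝ) : geomMeasure p = Measure.count.withDensity (dens p) := rfl

lemma dens_zero (p : ℝ) : dens p 0 = 0 := by simp [dens]

lemma dens_succ (p : ℝ) (k : ℕ) : dens p (k + 1) = ENNReal.ofReal ((1 - p) ^ k * p) := by
  simp [dens]

/-- shift a tsum over ℕ when the 0 term vanishes -/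
lemma tsum_shift {f : ℕ → ℝ≥0∞} (h0 : f 0 = 0) : ∑' k, f k = ∑' k, f (k + 1) := by
  refine (Function.Injective.tsum_eq Nat.succ_injective ?_).symm
  intro x hx
  have hne : x ≠ 0 := by rintro rfl; exact hx h0
  obtain ⟨y, rfl⟩ := Nat.exists_eq_succ_of_ne_zero hne
  exact ⟨y, rfl⟩

lemma dens_tsum {p : ℝ} (hp : 0 < p) (hp1 : p ≤ 1) : ∑' k, dens p k = 1 := by
  rw [tsum_shift (dens_zero p)]
  simp only [dens_succ]
  have hnn : ∀ k : ℕ, 0 ≤ (1 - p) ^ k * p := fun k => mul_nonneg (pow_nonneg (by linarith) k) hp.le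
  have hsum : Summable (fun k : ℕ => (1 - p) ^ k * p) :=
    (summable_geometric_of_lt_one (by linarith) (by linarith)).mul_right p
  rw [← ENNReal.ofReal_tsum_of_nonneg hnn hsum]
  rw [tsum_mul_right, tsum_geometric_of_lt_one (by linarith) (by linarith)]
  rw [show (1 : ℝ) - (1 - p) = p by ring, inv_mul_cancel₀ hp.ne']
  exact ENNReal.ofReal_one

lemma geomMeasure_univ {p : ℝ} (hp : 0 < p) (hp1 : p ≤ 1) :
    geomMeasure p Set.univ = 1 := by
  rw [geomMeasure_eq, withDensity_apply _ MeasurableSet.univ, Measure.restrict_univ,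
    lintegral_count, dens_tsum hp hp1]

lemma geomMeasure_isProb {p : ℝ} (hp : 0 < p) (hp1 : p ≤ 1) :
    IsProbabilityMeasure (geomMeasure p) := ⟨geomMeasure_univ hp hp1⟩

lemma geomMeasure_singleton (p : ℝ) (k : ℕ) : geomMeasure p {k} = dens p k := by
  rw [geomMeasure_eq, withDensity_apply _ (measurableSet_singleton k),
    lintegral_singleton, Measure.count_singleton, mul_one]

/-- expansion of `geomF` as an explicit sum -/
lemma geomF_eq (m j : ℕ) (p : Fin m → ℝ) (hp : ∀ i, p i ∈ Set.Ioc (0:ℝ) 1) :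
    geomF m j p
      = ∑' x : Fin m → ℕ, (if j < ∑ i, x i then ∏ i, dens (p i) (x i) else 0) := by
  haveI : ∀ i, IsProbabilityMeasure (geomMeasure (p i)) :=
    fun i => geomMeasure_isProb (hp i).1 (hp i).2
  set μ := Measure.pi (fun i : Fin m => geomMeasure (p i)) with hμ
  set St : Set (Fin m → ℕ) := {x | j < ∑ i, x i} with hSt
  have hcnt : St.Countable := Set.to_countable St
  have hmeas : ∀ y ∈ St, MeasurableSet ((id : (Fin m → ℕ) → (Fin m → ℕ)) ⁻¹' {y}) := by
    intro y _
    rw [Set.preimage_id]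
    exact measurableSet_singleton y
  have h1 := tsum_measure_preimage_singleton (μ := μ) hcnt hmeas
  rw [Set.preimage_id] at h1
  have hsing : ∀ x : Fin m → ℕ, μ {x} = ∏ i, dens (p i) (x i) := by
    intro x
    rw [← Set.univ_pi_singleton x, hμ, Measure.pi_pi]
    exact Finset.prod_congr rfl fun i _ => geomMeasure_singleton (p i) (x i)
  have h2 : ∀ b : St, μ (id ⁻¹' {(b : Fin m → ℕ)}) = ∏ i, dens (p i) ((b : Fin m → ℕ) i) := by
    intro b
    rw [Set.preimage_id]
    exact hsing b
  calc geomF m j p = μ St := rfl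
    _ = ∑' b : St, μ (id ⁻¹' {(b : Fin m → ℕ)}) := h1.symm
    _ = ∑' b : St, ∏ i, dens (p i) ((b : Fin m → ℕ) i) := tsum_congr h2
    _ = ∑' x : Fin m → ℕ, St.indicator (fun x => ∏ i, dens (p i) (x i)) x :=
        tsum_subtype St (fun x => ∏ i, dens (p i) (x i))
    _ = ∑' x : Fin m → ℕ, (if j < ∑ i, x i then ∏ i, dens (p i) (x i) else 0) := by
        apply tsum_congr
        intro x
        rw [Set.indicator_apply]
        rfl

/-- permutation invariance -/
lemma geomF_perm (m j : ℕ) (p : Fin m → ℝ) (hp : ∀ i, p i ∈ Set.Ioc (0:ℝ) 1)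
    (σ : Equiv.Perm (Fin m)) : geomF m j (p ∘ σ) = geomF m j p := by
  rw [geomF_eq m j (p ∘ σ) (fun i => hp (σ i)), geomF_eq m j p hp]
  rw [← Equiv.tsum_eq (Equiv.arrowCongr σ (Equiv.refl ℕ))
    (fun x => if j < ∑ i, x i then ∏ i, dens (p i) (x i) else 0)]
  apply tsum_congr
  intro x
  have hx : ∀ i, (Equiv.arrowCongr σ (Equiv.refl ℕ)) x i = x (σ.symm i) := fun i => rfl
  have hsum : ∑ i, (Equiv.arrowCongr σ (Equiv.refl ℕ)) x i = ∑ i, x i := by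
    simp only [hx]
    exact Equiv.sum_comp σ.symm x
  have hprd : ∏ i, dens (p i) ((Equiv.arrowCongr σ (Equiv.refl ℕ)) x i)
      = ∏ i, dens ((p ∘ σ) i) (x i) := by
    simp only [hx]
    rw [← Equiv.prod_comp σ (fun i => dens (p i) (x (σ.symm i)))]
    exact Finset.prod_congr rfl fun i _ => by rw [Equiv.symm_apply_apply]; rfl
  rw [hsum, hprd]

end GeomAvgAux

namespace GeomAvgAux

open Finset ENNReal

/-- evaluation of the real double sum for the cdf -/
lemma real_cdf_sum (j R : ℕ) (a b p q : ℝ) :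
    ∑ y ∈ range (j + 1), ∑ z ∈ range (j + 1),
        (if j < y + z + 2 + R then (0:ℝ) else a ^ y * p * (b ^ z * q))
      = p * q * ∑ d ∈ range (j - R - 1), hpoly a b d := by
  set N := j - R - 1 with hN
  have hinner : ∀ y, ∑ z ∈ range (j + 1),
      (if j < y + z + 2 + R then (0:ℝ) else a ^ y * p * (b ^ z * q))
      = ∑ z ∈ range (N - y), a ^ y * p * (b ^ z * q) := by
    intro y
    have e1 : ∀ z, (if j < y + z + 2 + R then (0:ℝ) else a ^ y * p * (b ^ z * q))
        = if z < N - y then a ^ y * p * (b ^ z * q) else 0 := by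
      intro z
      by_cases hz : j < y + z + 2 + R
      · rw [if_pos hz, if_neg (by omega)]
      · rw [if_neg hz, if_pos (by omega)]
    rw [Finset.sum_congr rfl (fun z _ => e1 z), ← Finset.sum_filter]
    apply Finset.sum_congr _ (fun z _ => rfl)
    ext z
    simp only [Finset.mem_filter, Finset.mem_range]
    omega
  rw [Finset.sum_congr rfl (fun y _ => hinner y)]
  have houter : ∑ y ∈ range (j + 1), ∑ z ∈ range (N - y), a ^ y * p * (b ^ z * q)
      = ∑ y ∈ range N, ∑ z ∈ range (N - y), a ^ y * p * (b ^ z * q) := by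
    symm
    apply Finset.sum_subset (Finset.range_subset_range.2 (by omega))
    intro y _ hy
    rw [Finset.mem_range, not_lt] at hy
    have hz : N - y = 0 := by omega
    rw [hz]
    simp
  rw [houter]
  have htri := triangle (fun i z => a ^ i * p * (b ^ z * q)) N
  rw [← htri, Finset.mul_sum]
  apply Finset.sum_congr rfl
  intro n _
  rw [hpoly, Finset.mul_sum]
  apply Finset.sum_congr rfl
  intro i _
  ring

/-- the cdf double tsum evaluates to an explicit real -/
lemma cdf_val (j R : ℕ) {p q : ℝ} (hp : 0 < p) (hp1 : p ≤ 1) (hq : 0 < q) (hq1 : q ≤ 1) :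
    (∑' y, ∑' z, if j < y + z + R then 0 else dens p y * dens q z)
      = ENNReal.ofReal (p * q * ∑ d ∈ range (j - R - 1), hpoly (1 - p) (1 - q) d) := by
  have ha : (0:ℝ) ≤ 1 - p := by linarith
  have hb : (0:ℝ) ≤ 1 - q := by linarith
  -- shift both indices
  have hshift : (∑' y, ∑' z, if j < y + z + R then 0 else dens p y * dens q z)
      = ∑' y, ∑' z, if j < (y+1) + (z+1) + R then 0 else dens p (y+1) * dens q (z+1) := by
    rw [tsum_shift (f := fun y => ∑' z, if j < y + z + R then 0 else dens p y * dens q z)]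
    · apply tsum_congr
      intro y
      rw [tsum_shift (f := fun z => if j < (y+1) + z + R then 0 else dens p (y+1) * dens q z)]
      simp [dens_zero]
    · simp [dens_zero]
  rw [hshift]
  -- rewrite each term as ofReal of a real term
  have hterm : ∀ y z : ℕ, (if j < (y+1) + (z+1) + R then 0 else dens p (y+1) * dens q (z+1))
      = ENNReal.ofReal
        (if j < y + z + 2 + R then (0:ℝ) else (1-p) ^ y * p * ((1-q) ^ z * q)) := by
    intro y z
    have hcond : (j < (y+1) + (z+1) + R) ↔ (j < y + z + 2 + R) := by omega
    by_cases h : j < y + z + 2 + R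
    · rw [if_pos (hcond.2 h), if_pos h, ENNReal.ofReal_zero]
    · rw [if_neg (fun hh => h (hcond.1 hh)), if_neg h, dens_succ, dens_succ,
        ← ENNReal.ofReal_mul (mul_nonneg (pow_nonneg ha y) hp.le)]
  simp only [hterm]
  -- inner tsum to finset sum
  have hin : ∀ y : ℕ, (∑' z, ENNReal.ofReal
      (if j < y + z + 2 + R then (0:ℝ) else (1-p) ^ y * p * ((1-q) ^ z * q)))
      = ENNReal.ofReal (∑ z ∈ range (j+1),
          (if j < y + z + 2 + R then (0:ℝ) else (1-p) ^ y * p * ((1-q) ^ z * q))) := by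
    intro y
    rw [tsum_eq_sum (s := range (j+1)) ?side]
    · rw [ENNReal.ofReal_sum_of_nonneg]
      intro z _
      by_cases h : j < y + z + 2 + R
      · rw [if_pos h]
      · rw [if_neg h]
        exact mul_nonneg (mul_nonneg (pow_nonneg ha y) hp.le)
          (mul_nonneg (pow_nonneg hb z) hq.le)
    case side =>
      intro z hz
      rw [Finset.mem_range, not_lt] at hz
      rw [if_pos (by omega), ENNReal.ofReal_zero]
  simp only [hin]
  -- outer tsum to finset sum
  rw [tsum_eq_sum (s := range (j+1)) ?oside]
  case oside =>
    intro y hy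
    rw [Finset.mem_range, not_lt] at hy
    have : ∀ z ∈ range (j+1),
        (if j < y + z + 2 + R then (0:ℝ) else (1-p) ^ y * p * ((1-q) ^ z * q)) = 0 := by
      intro z _
      rw [if_pos (by omega)]
    rw [Finset.sum_congr rfl this]
    simp
  rw [← ENNReal.ofReal_sum_of_nonneg]
  · rw [real_cdf_sum j R (1-p) (1-q) p q]
  · intro y _
    apply Finset.sum_nonneg
    intro z _
    by_cases h : j < y + z + 2 + R
    · rw [if_pos h]
    · rw [if_neg h]
      exact mul_nonneg (mul_nonneg (pow_nonneg ha y) hp.le)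
        (mul_nonneg (pow_nonneg hb z) hq.le)

/-- total mass of the double sum -/
lemma total_val {p q : ℝ} (hp : 0 < p) (hp1 : p ≤ 1) (hq : 0 < q) (hq1 : q ≤ 1) :
    (∑' (y : ℕ), ∑' (z : ℕ), dens p y * dens q z) = 1 := by
  have h1 : ∀ y : ℕ, (∑' z, dens p y * dens q z) = dens p y := by
    intro y
    rw [ENNReal.tsum_mul_left, dens_tsum hq hq1, mul_one]
  rw [tsum_congr h1, dens_tsum hp hp1]

/-- the key two-variable comparison of tails -/
lemma tail_le (j R : ℕ) {p q p' q' : ℝ}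
    (hp : 0 < p) (hp1 : p ≤ 1) (hq : 0 < q) (hq1 : q ≤ 1)
    (hp' : 0 < p') (hp1' : p' ≤ 1) (hq' : 0 < q') (hq1' : q' ≤ 1)
    (hsum : p' + q' = p + q) (hprod : p * q ≤ p' * q') :
    (∑' (y : ℕ), ∑' (z : ℕ), if j < y + z + R then dens p' y * dens q' z else 0)
      ≤ ∑' (y : ℕ), ∑' (z : ℕ), if j < y + z + R then dens p y * dens q z else 0 := by
  have hsplit : ∀ (P Q : ℝ),
      ((∑' (y : ℕ), ∑' (z : ℕ), if j < y + z + R then dens P y * dens Q z else 0)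
        + ∑' (y : ℕ), ∑' (z : ℕ), if j < y + z + R then 0 else dens P y * dens Q z)
      = ∑' (y : ℕ), ∑' (z : ℕ), dens P y * dens Q z := by
    intro P Q
    rw [← ENNReal.tsum_add]
    apply tsum_congr
    intro y
    rw [← ENNReal.tsum_add]
    apply tsum_congr
    intro z
    by_cases h : j < y + z + R
    · rw [if_pos h, if_pos h, add_zero]
    · rw [if_neg h, if_neg h, zero_add]
  have h1 := hsplit p q
  have h2 := hsplit p' q'
  rw [total_val hp hp1 hq hq1] at h1
  rw [total_val hp' hp1' hq' hq1'] at h2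
  -- cdf comparison
  have hcdf : (∑' (y : ℕ), ∑' (z : ℕ), if j < y + z + R then 0 else dens p y * dens q z)
      ≤ ∑' (y : ℕ), ∑' (z : ℕ), if j < y + z + R then 0 else dens p' y * dens q' z := by
    rw [cdf_val j R hp hp1 hq hq1, cdf_val j R hp' hp1' hq' hq1']
    apply ENNReal.ofReal_le_ofReal
    have := key_real (a := 1 - p) (b := 1 - q) (a' := 1 - p') (b' := 1 - q')
      (by linarith) (by linarith) (by linarith) (by linarith) (by linarith) (by linarith)
      (by linarith) (by nlinarith [hsum, hprod]) (j - R - 1)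
    calc p * q * ∑ d ∈ range (j - R - 1), hpoly (1-p) (1-q) d
        = (1 - (1-p)) * (1 - (1-q)) * ∑ d ∈ range (j - R - 1), hpoly (1-p) (1-q) d := by
          ring_nf
      _ ≤ (1 - (1-p')) * (1 - (1-q')) * ∑ d ∈ range (j - R - 1), hpoly (1-p') (1-q') d := this
      _ = p' * q' * ∑ d ∈ range (j - R - 1), hpoly (1-p') (1-q') d := by ring_nf
  -- conclude by cancellation
  have hfin : (∑' (y : ℕ), ∑' (z : ℕ), if j < y + z + R then 0 else dens p' y * dens q' z)
      ≠ ⊤ := by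
    intro hP
    rw [hP] at h2
    simp at h2
  have hle : (∑' (y : ℕ), ∑' (z : ℕ), if j < y + z + R then dens p' y * dens q' z else 0)
        + (∑' (y : ℕ), ∑' (z : ℕ), if j < y + z + R then 0 else dens p' y * dens q' z)
      ≤ (∑' (y : ℕ), ∑' (z : ℕ), if j < y + z + R then dens p y * dens q z else 0)
        + (∑' (y : ℕ), ∑' (z : ℕ), if j < y + z + R then 0 else dens p' y * dens q' z) := by
    rw [h2, ← h1]
    exact add_le_add (le_refl _) hcdf
  exact (ENNReal.add_le_add_iff_right hfin).mp hle

end GeomAvgAux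

namespace GeomAvgAux

open Finset ENNReal

/-- the equivalence splitting off coordinates 0 and 1 -/
def splitE (k : ℕ) : ((Fin k → ℕ) × ℕ × ℕ) ≃ (Fin (k + 2) → ℕ) :=
  ((Equiv.prodComm (Fin k → ℕ) (ℕ × ℕ)).trans (Equiv.prodAssoc ℕ ℕ (Fin k → ℕ))).trans
    ((Equiv.prodCongr (Equiv.refl ℕ) (Fin.consEquiv fun _ => ℕ)).trans
      (Fin.consEquiv fun _ => ℕ))

lemma cons_sum (k : ℕ) (y z : ℕ) (r : Fin k → ℕ) :
    ∑ i, (Fin.cons y (Fin.cons z r) : Fin (k + 2) → ℕ) i = y + z + ∑ l, r l := by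
  rw [Fin.sum_univ_succ]
  simp only [Fin.cons_zero, Fin.cons_succ]
  rw [Fin.sum_univ_succ]
  simp only [Fin.cons_zero, Fin.cons_succ]
  ring

lemma cons_prod (k : ℕ) (P : Fin (k + 2) → ℝ) (y z : ℕ) (r : Fin k → ℕ) :
    ∏ i, dens (P i) ((Fin.cons y (Fin.cons z r) : Fin (k + 2) → ℕ) i)
      = dens (P 0) y * (dens (P 1) z * ∏ l, dens (P l.succ.succ) (r l)) := by
  rw [Fin.prod_univ_succ]
  simp only [Fin.cons_zero, Fin.cons_succ]
  rw [Fin.prod_univ_succ]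
  simp only [Fin.cons_zero, Fin.cons_succ, Fin.succ_zero_eq_one]

lemma inner_eval (k j : ℕ) (P : Fin (k + 2) → ℝ) (r : Fin k → ℕ) :
    (∑' (y : ℕ), ∑' (z : ℕ),
        (if j < ∑ i, (Fin.cons y (Fin.cons z r) : Fin (k + 2) → ℕ) i
          then ∏ i, dens (P i) ((Fin.cons y (Fin.cons z r) : Fin (k + 2) → ℕ) i) else 0))
      = (∑' (y : ℕ), ∑' (z : ℕ),
          if j < y + z + (∑ l, r l) then dens (P 0) y * dens (P 1) z else 0)
        * ∏ l, dens (P l.succ.succ) (r l) := by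
  rw [← ENNReal.tsum_mul_right]
  apply tsum_congr
  intro y
  rw [← ENNReal.tsum_mul_right]
  apply tsum_congr
  intro z
  rw [cons_sum, cons_prod]
  by_cases h : j < y + z + ∑ l, r l
  · rw [if_pos h, if_pos h, mul_assoc]
  · rw [if_neg h, if_neg h, zero_mul]

/-- the swap lemma at coordinates 0 and 1 -/
lemma swap01 (k j : ℕ) (p p' : Fin (k + 2) → ℝ)
    (hp : ∀ i, p i ∈ Set.Ioc (0:ℝ) 1) (hp' : ∀ i, p' i ∈ Set.Ioc (0:ℝ) 1)
    (hrest : ∀ l : Fin k, p' l.succ.succ = p l.succ.succ)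
    (hsum : p' 0 + p' 1 = p 0 + p 1) (hprod : p 0 * p 1 ≤ p' 0 * p' 1) :
    geomF (k + 2) j p' ≤ geomF (k + 2) j p := by
  rw [geomF_eq _ _ _ hp', geomF_eq _ _ _ hp]
  rw [← Equiv.tsum_eq (splitE k)
    (fun x => if j < ∑ i, x i then ∏ i, dens (p' i) (x i) else 0)]
  rw [← Equiv.tsum_eq (splitE k)
    (fun x => if j < ∑ i, x i then ∏ i, dens (p i) (x i) else 0)]
  rw [ENNReal.tsum_prod', ENNReal.tsum_prod']
  apply ENNReal.tsum_le_tsum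
  intro r
  rw [ENNReal.tsum_prod', ENNReal.tsum_prod']
  have hE : ∀ y z : ℕ, (splitE k) (r, y, z) = Fin.cons y (Fin.cons z r) := fun _ _ => rfl
  simp only [hE]
  rw [inner_eval k j p' r, inner_eval k j p r]
  have hC : (∏ l, dens (p' l.succ.succ) (r l)) = ∏ l, dens (p l.succ.succ) (r l) :=
    Finset.prod_congr rfl fun l _ => by rw [hrest l]
  rw [hC]
  gcongr ?_ * _
  exact tail_le j (∑ l, r l) (hp 0).1 (hp 0).2 (hp 1).1 (hp 1).2
    (hp' 0).1 (hp' 0).2 (hp' 1).1 (hp' 1).2 hsum hprod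

/-- the swap lemma at arbitrary coordinates -/
lemma swap_general (k j : ℕ) (p p' : Fin (k + 2) → ℝ)
    (hp : ∀ i, p i ∈ Set.Ioc (0:ℝ) 1) (hp' : ∀ i, p' i ∈ Set.Ioc (0:ℝ) 1)
    (i t : Fin (k + 2)) (hit : i ≠ t)
    (hrest : ∀ l, l ≠ i → l ≠ t → p' l = p l)
    (hsum : p' i + p' t = p i + p t) (hprod : p i * p t ≤ p' i * p' t) :
    geomF (k + 2) j p' ≤ geomF (k + 2) j p := by
  have h01 : (0 : Fin (k + 2)) ≠ 1 := by
    intro h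
    have := congrArg Fin.val h
    simp [Fin.val_zero, Fin.val_one] at this
  set τ := Equiv.swap (0 : Fin (k + 2)) i with hτ
  set u := τ.symm t with hu
  have hτ0 : τ 0 = i := Equiv.swap_apply_left 0 i
  have hτu : τ u = t := Equiv.apply_symm_apply τ t
  have hu0 : u ≠ 0 := by
    intro h
    rw [h] at hτu
    exact hit (hτ0.symm.trans hτu)
  set σ : Equiv.Perm (Fin (k + 2)) := τ * (Equiv.swap 1 u) with hσ
  have hσ0 : σ 0 = i := by
    show τ (Equiv.swap 1 u 0) = i
    rw [Equiv.swap_apply_of_ne_of_ne h01 (Ne.symm hu0)]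
    exact hτ0
  have hσ1 : σ 1 = t := by
    show τ (Equiv.swap 1 u 1) = t
    rw [Equiv.swap_apply_left]
    exact hτu
  have h1 : geomF (k + 2) j (p' ∘ σ) ≤ geomF (k + 2) j (p ∘ σ) := by
    apply swap01 k j (p ∘ σ) (p' ∘ σ) (fun l => hp (σ l)) (fun l => hp' (σ l))
    · intro l
      show p' (σ l.succ.succ) = p (σ l.succ.succ)
      apply hrest
      · intro h
        have h2 := σ.injective (h.trans hσ0.symm)
        exact (Fin.succ_ne_zero _) h2
      · intro h
        have h2 := σ.injective (h.trans hσ1.symm)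
        rw [← Fin.succ_zero_eq_one] at h2
        have h3 := Fin.succ_injective _ h2
        exact (Fin.succ_ne_zero _) h3
    · show p' (σ 0) + p' (σ 1) = p (σ 0) + p (σ 1)
      rw [hσ0, hσ1]
      exact hsum
    · show p (σ 0) * p (σ 1) ≤ p' (σ 0) * p' (σ 1)
      rw [hσ0, hσ1]
      exact hprod
  rw [geomF_perm _ _ _ hp σ, geomF_perm _ _ _ hp' σ] at h1
  exact h1

/-- Robin Hood induction -/
lemma robin_hood (k j : ℕ) (c : ℝ) (hc : c ∈ Set.Ioc (0:ℝ) 1) :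
    ∀ n (p : Fin (k + 2) → ℝ), (∀ i, p i ∈ Set.Ioc (0:ℝ) 1)
      → (∑ i, p i = ((k : ℝ) + 2) * c)
      → (Finset.univ.filter (fun i => p i ≠ c)).card = n
      → geomF (k + 2) j (fun _ => c) ≤ geomF (k + 2) j p := by
  intro n
  induction n using Nat.strong_induction_on with
  | _ n ih =>
    intro p hp hsum hcard
    rcases Nat.eq_zero_or_pos n with hn | hn
    · have hconst : p = fun _ => c := by
        funext i
        by_contra h
        have hmem : i ∈ Finset.univ.filter (fun i => p i ≠ c) :=
          Finset.mem_filter.2 ⟨Finset.mem_univ i, h⟩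
        rw [hn] at hcard
        rw [Finset.card_eq_zero] at hcard
        rw [hcard] at hmem
        exact absurd hmem (Finset.notMem_empty i)
      rw [hconst]
    · have hne : (Finset.univ.filter (fun i => p i ≠ c)).Nonempty :=
        Finset.card_pos.mp (by omega)
      obtain ⟨i, hi⟩ := hne
      have hpi : p i ≠ c := (Finset.mem_filter.mp hi).2
      have hsum0 : ∑ t, (p t - c) = 0 := by
        rw [Finset.sum_sub_distrib, hsum]
        simp [Finset.card_univ]
        all_goals push_cast; ring
      have hex : ∃ t, (p i - c) * (p t - c) < 0 := by
        by_contra hcon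
        push_neg at hcon
        have hall : ∀ t ∈ Finset.univ, (0:ℝ) ≤ (p i - c) * (p t - c) := fun t _ => hcon t
        have hsumprod : ∑ t, (p i - c) * (p t - c) = 0 := by
          rw [← Finset.mul_sum, hsum0, mul_zero]
        have hzero := (Finset.sum_eq_zero_iff_of_nonneg hall).mp hsumprod i (Finset.mem_univ i)
        have : p i = c := by nlinarith [hzero]
        exact hpi this
      obtain ⟨t, ht⟩ := hex
      have hti : i ≠ t := by rintro rfl; nlinarith [ht]
      have hpt : p t ≠ c := by
        intro h
        rw [h] at ht
        simp at ht
      set p'' : Fin (k + 2) → ℝ :=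
        Function.update (Function.update p i c) t (p i + p t - c) with hp''def
      have hp''i : p'' i = c := by
        rw [hp''def, Function.update_of_ne hti, Function.update_self]
      have hp''t : p'' t = p i + p t - c := by
        rw [hp''def, Function.update_self]
      have hp''other : ∀ l, l ≠ i → l ≠ t → p'' l = p l := by
        intro l hli hlt
        rw [hp''def, Function.update_of_ne hlt, Function.update_of_ne hli]
      have hcase : (p i < c ∧ c < p t) ∨ (p t < c ∧ c < p i) := by
        rcases lt_trichotomy (p i) c with h | h | h
        · left; exact ⟨h, by nlinarith [ht]⟩
        · exact absurd h hpi
        · right; exact ⟨by nlinarith [ht], h⟩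
      have hbt : 0 < p i + p t - c ∧ p i + p t - c ≤ 1 := by
        rcases hcase with ⟨h1, h2⟩ | ⟨h1, h2⟩
        · exact ⟨by nlinarith [(hp i).1], by nlinarith [(hp t).2]⟩
        · exact ⟨by nlinarith [(hp t).1], by nlinarith [(hp i).2]⟩
      have hp'' : ∀ l, p'' l ∈ Set.Ioc (0:ℝ) 1 := by
        intro l
        by_cases hli : l = i
        · rw [hli, hp''i]; exact hc
        · by_cases hlt : l = t
          · rw [hlt, hp''t]; exact ⟨hbt.1, hbt.2⟩
          · rw [hp''other l hli hlt]; exact hp l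
      have hswap : geomF (k + 2) j p'' ≤ geomF (k + 2) j p := by
        apply swap_general k j p p'' hp hp'' i t hti hp''other
        · rw [hp''i, hp''t]; ring
        · rw [hp''i, hp''t]; nlinarith [ht]
      have hsum'' : ∑ l, p'' l = ((k : ℝ) + 2) * c := by
        have hstep : ∑ l, p'' l = ∑ l, p l := by
          rw [hp''def]
          rw [Finset.sum_update_of_mem (Finset.mem_univ t)]
          have hmem2 : i ∈ Finset.univ \ {t} := by
            rw [Finset.mem_sdiff]
            exact ⟨Finset.mem_univ i, by simpa using hti⟩
          rw [Finset.sum_update_of_mem hmem2]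
          have e1 : ∑ x ∈ Finset.univ \ {t}, p x = (∑ x, p x) - p t := by
            rw [Finset.sum_sdiff_eq_sub (Finset.singleton_subset_iff.2 (Finset.mem_univ t))]
            simp
          have e2 : ∑ x ∈ (Finset.univ \ {t}) \ {i}, p x = ((∑ x, p x) - p t) - p i := by
            rw [Finset.sum_sdiff_eq_sub (Finset.singleton_subset_iff.2 hmem2)]
            rw [e1]
            simp
          rw [e2]
          ring
        rw [hstep, hsum]
      have hsubset : (Finset.univ.filter (fun l => p'' l ≠ c))
          ⊆ (Finset.univ.filter (fun l => p l ≠ c)).erase i := by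
        intro l hl
        rw [Finset.mem_filter] at hl
        have hl2 := hl.2
        have hli : l ≠ i := by
          intro h
          rw [h, hp''i] at hl2
          exact hl2 rfl
        rw [Finset.mem_erase]
        refine ⟨hli, Finset.mem_filter.2 ⟨Finset.mem_univ l, ?_⟩⟩
        by_cases hlt : l = t
        · rw [hlt]; exact hpt
        · rw [← hp''other l hli hlt]; exact hl2
      have hcard'' : (Finset.univ.filter (fun l => p'' l ≠ c)).card < n := by
        calc (Finset.univ.filter (fun l => p'' l ≠ c)).card
            ≤ ((Finset.univ.filter (fun l => p l ≠ c)).erase i).card :=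
              Finset.card_le_card hsubset
          _ = (Finset.univ.filter (fun l => p l ≠ c)).card - 1 :=
              Finset.card_erase_of_mem hi
          _ < n := by omega
      exact le_trans (ih _ hcard'' p'' hp'' hsum'' rfl) hswap

end GeomAvgAux

/-- For all integers `m ≥ 2`, `j ≥ 1` and `p_1, …, p_m ∈ (0,1]`,
`f_{m,j}(p_1, …, p_m) ≥ f_{m,j}(p̄, …, p̄)` where `p̄ = (p_1 + ⋯ + p_m)/m`. -/
theorem geomF_ge_geomF_avg
    (m j : ℕ) (hm : 2 ≤ m) (hj : 1 ≤ j)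
    (p : Fin m → ℝ) (hp : ∀ i, p i ∈ Set.Ioc (0 : ℝ) 1) :
    geomF m j (fun _ => (∑ i, p i) / m) ≤ geomF m j p := by
  obtain ⟨k, rfl⟩ : ∃ k, m = k + 2 := ⟨m - 2, by omega⟩
  have hcast : ((k + 2 : ℕ) : ℝ) = (k : ℝ) + 2 := by push_cast; ring
  have hpos : 0 < ∑ i, p i :=
    Finset.sum_pos (fun i _ => (hp i).1) ⟨0, Finset.mem_univ 0⟩
  have hle : ∑ i, p i ≤ (k : ℝ) + 2 := by
    calc ∑ i, p i ≤ ∑ _i : Fin (k + 2), (1 : ℝ) := Finset.sum_le_sum fun i _ => (hp i).2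
      _ = (k : ℝ) + 2 := by
          simp [Finset.card_univ]
          all_goals push_cast; ring
  have hcpos : 0 < (∑ i, p i) / ((k + 2 : ℕ) : ℝ) := by
    apply div_pos hpos
    rw [hcast]
    positivity
  have hc1 : (∑ i, p i) / ((k + 2 : ℕ) : ℝ) ≤ 1 := by
    rw [div_le_one (by rw [hcast]; positivity)]
    rw [hcast]
    exact hle
  have hsum : ∑ i, p i = ((k : ℝ) + 2) * ((∑ i, p i) / ((k + 2 : ℕ) : ℝ)) := by
    rw [hcast]
    field_simp
  exact GeomAvgAux.robin_hood k j ((∑ i, p i) / ((k + 2 : ℕ) : ℝ)) ⟨hcpos, hc1⟩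
    _ p hp hsum rfl
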